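/- arXiv:1402.1392 — 3 statements merged into one kernel-verified Lean document; each statement's English description precedes it below -/
import Mathlib

section
/- Assume the set of positive imaginary roots Δ^im_+ is non-empty. Then the imaginary cone I is a convex cone (it is convex and closed under multiplication by non-negative reals) and is contained in the cone Σ_{i=1}^n ℝ_{≥0}·α_i ⊂ L ⊗ ℝ. -/
open scoped BigOperators

noncomputable section

namespace KacMoodyStab

variable {ι : Type*} [Fintype ι] [DecidableEq ι]

/-- A symmetric generalized Cartan matrix: symmetric, `2` on the diagonal,
non-positive integers off the diagonal. -/
def IsGCM (A : Matrix ι ι ℤ) : Prop :=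
  A.IsSymm ∧ (∀ i, A i i = 2) ∧ ∀ i j, i ≠ j → A i j ≤ 0

/-- The simple root `α i` in the root lattice `L = ι → ℤ`. -/
def sroot (i : ι) : ι → ℤ := Pi.single i 1

/-- The symmetric bilinear form `(x, y) = ∑ i j, x i * A i j * y j` on the root lattice. -/
def bform (A : Matrix ι ι ℤ) (x y : ι → ℤ) : ℤ := ∑ i, ∑ j, x i * A i j * y j

/-- The linear functional `λ ↦ (λ, α i)`. -/
def corootFn (A : Matrix ι ι ℤ) (i : ι) : (ι → ℤ) →ₗ[ℤ] ℤ where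
  toFun x := ∑ j, x j * A j i
  map_add' x y := by simp [add_mul, Finset.sum_add_distrib]
  map_smul' c x := by simp [Finset.mul_sum, mul_assoc]

lemma corootFn_sroot (A : Matrix ι ι ℤ) (hA : IsGCM A) (i : ι) :
    corootFn A i (sroot i) = 2 := by
  have h : ∀ j, (sroot i) j * A j i = if j = i then A j i else 0 := by
    intro j
    by_cases h : j = i <;> simp [sroot, Pi.single_apply, h]
  have : corootFn A i (sroot i) = ∑ j, (sroot i) j * A j i := rfl
  rw [this]
  simp [h, hA.2.1 i]

/-- The simple reflection `r i : λ ↦ λ - (λ, α i) α i` as a `ℤ`-linear automorphism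
of the root lattice. -/
def srefl (A : Matrix ι ι ℤ) (hA : IsGCM A) (i : ι) : (ι → ℤ) ≃ₗ[ℤ] (ι → ℤ) :=
  Module.reflection (corootFn_sroot A hA i)

/-- The Weyl group, the subgroup of automorphisms of the root lattice generated by the
simple reflections. -/
def weylGroup (A : Matrix ι ι ℤ) (hA : IsGCM A) : Subgroup ((ι → ℤ) ≃ₗ[ℤ] (ι → ℤ)) :=
  Subgroup.closure (Set.range (srefl A hA))

/-- The set of real roots: the orbit of the simple roots under the Weyl group. -/
def realRoots (A : Matrix ι ι ℤ) (hA : IsGCM A) : Set (ι → ℤ) :=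
  {α | ∃ w ∈ weylGroup A hA, ∃ i, α = w (sroot i)}

/-- The set of positive real roots. -/
def posRealRoots (A : Matrix ι ι ℤ) (hA : IsGCM A) : Set (ι → ℤ) :=
  realRoots A hA ∩ {α | ∀ i, 0 ≤ α i}

/-- The Dynkin diagram of a (symmetric) GCM: distinct `i`, `j` are adjacent
iff `A i j < 0`. -/
def dynkin (A : Matrix ι ι ℤ) : SimpleGraph ι where
  Adj i j := i ≠ j ∧ (A i j < 0 ∨ A j i < 0)
  symm := ⟨fun i j h => ⟨h.1.symm, h.2.symm⟩⟩
  loopless := ⟨fun i h => h.1 rfl⟩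

/-- The fundamental set `K` of positive imaginary roots: non-zero, non-negative,
connected support, and `(α, α i) ≤ 0` for all `i`. -/
def fundamentalSet (A : Matrix ι ι ℤ) : Set (ι → ℤ) :=
  {α | (∀ i, 0 ≤ α i) ∧ α ≠ 0 ∧
    ((dynkin A).induce {i | α i ≠ 0}).Connected ∧
    ∀ i, bform A α (sroot i) ≤ 0}

/-- The set of positive imaginary roots: the orbit of the fundamental set under the
Weyl group. -/
def posImRoots (A : Matrix ι ι ℤ) (hA : IsGCM A) : Set (ι → ℤ) :=
  {β | ∃ w ∈ weylGroup A hA, ∃ α ∈ fundamentalSet A, β = w α}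

/-- The set of all roots `Δ = Δ^re ∪ Δ^im`. -/
def allRoots (A : Matrix ι ι ℤ) (hA : IsGCM A) : Set (ι → ℤ) :=
  realRoots A hA ∪ (posImRoots A hA ∪ {α | -α ∈ posImRoots A hA})

/-- The canonical embedding of the root lattice into `V*_ℝ = L ⊗ ℝ = ι → ℝ`. -/
def castR (α : ι → ℤ) : ι → ℝ := fun i => (α i : ℝ)

/-- The imaginary cone: the closure of the convex hull of `Δ^im_+ ∪ {0}` in `V*_ℝ`. -/
def imCone (A : Matrix ι ι ℤ) (hA : IsGCM A) : Set (ι → ℝ) :=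
  closure (convexHull ℝ (insert 0 (castR '' posImRoots A hA)))

/-- The pairing of `Z ∈ V = Hom_ℤ(L, ℂ)` (recorded by its values `Z i = Z(α i)`)
with an element of `V*_ℝ`, via the `ℝ`-linear extension of `Z`. -/
def pairC (Z : ι → ℂ) (l : ι → ℝ) : ℂ := ∑ i, Z i * (l i : ℂ)

/-- The pairing of `Z ∈ V = Hom_ℤ(L, ℂ)` with an element of the root lattice. -/
def pairCZ (Z : ι → ℂ) (α : ι → ℤ) : ℂ := ∑ i, Z i * (α i : ℂ)

/-- The pairing of `Z ∈ V_ℝ = Hom_ℤ(L, ℝ)` with an element of `V*_ℝ`. -/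
def pairR (Z : ι → ℝ) (l : ι → ℝ) : ℝ := ∑ i, Z i * l i

/-- The set `X = V \ ∪_{λ ∈ I₀} H_λ`. -/
def Xset (A : Matrix ι ι ℤ) (hA : IsGCM A) : Set (ι → ℂ) :=
  {Z | ∀ l ∈ imCone A hA \ {0}, pairC Z l ≠ 0}

/-- The regular subset `Xreg = X \ ∪_{α ∈ Δ^re_+} H_α`. -/
def Xreg (A : Matrix ι ι ℤ) (hA : IsGCM A) : Set (ι → ℂ) :=
  Xset A hA ∩ {Z | ∀ α ∈ posRealRoots A hA, pairCZ Z α ≠ 0}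

/-- The sector `{r e^{iπφ} : r > 0, φ₁ ≤ φ ≤ φ₂}` in `ℂ`. -/
def sector (φ₁ φ₂ : ℝ) : Set ℂ :=
  {z | ∃ r : ℝ, 0 < r ∧ ∃ φ : ℝ, φ₁ ≤ φ ∧ φ ≤ φ₂ ∧
    z = (r : ℂ) * Complex.exp (Real.pi * φ * Complex.I)}

/-- The contragredient action of a lattice automorphism `w` on `V = Hom_ℤ(L, ℂ)`:
`(w·Z)(α i) = Z(w⁻¹ α i)`. -/
def actC (w : (ι → ℤ) ≃ₗ[ℤ] (ι → ℤ)) (Z : ι → ℂ) : ι → ℂ :=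
  fun i => ∑ j, Z j * ((w.symm (sroot i)) j : ℂ)

/-- The contragredient action of a lattice automorphism `w` on `V_ℝ = Hom_ℤ(L, ℝ)`:
`(w·Z)(α i) = Z(w⁻¹ α i)`. -/
def actR (w : (ι → ℤ) ≃ₗ[ℤ] (ι → ℤ)) (Z : ι → ℝ) : ι → ℝ :=
  fun i => ∑ j, Z j * ((w.symm (sroot i)) j : ℝ)

/-- The `ℝ`-linear extension of a lattice automorphism `w` to `V*_ℝ = L ⊗ ℝ`. -/
def extR (w : (ι → ℤ) ≃ₗ[ℤ] (ι → ℤ)) (l : ι → ℝ) : ι → ℝ :=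
  fun i => ∑ j, ((w (sroot j)) i : ℝ) * l j

/-- Finite type for a GCM (Kac's condition (Fin)). -/
def IsFiniteType (A : Matrix ι ι ℤ) : Prop :=
  A.det ≠ 0 ∧
  (∃ u : ι → ℝ, (∀ i, 0 < u i) ∧ ∀ i, 0 < (A.map (Int.cast : ℤ → ℝ)).mulVec u i) ∧
  ∀ u : ι → ℝ, (∀ i, 0 ≤ (A.map (Int.cast : ℤ → ℝ)).mulVec u i) →
    (∀ i, 0 < u i) ∨ u = 0

/-- The (open) Weyl chamber `C_ℝ` in `V_ℝ`. -/
def weylChamber : Set (ι → ℝ) := {Z | ∀ i, 0 < Z i}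

/-- The closed Weyl chamber in `V_ℝ`. -/
def weylChamberCl : Set (ι → ℝ) := {Z | ∀ i, 0 ≤ Z i}

/-- The Tits cone `T_ℝ = ∪_{w ∈ W} w(C̄_ℝ)`. -/
def titsCone (A : Matrix ι ι ℤ) (hA : IsGCM A) : Set (ι → ℝ) :=
  ⋃ w ∈ weylGroup A hA, actR w '' (weylChamberCl (ι := ι))

/-- The regular part of the Tits cone `T_{ℝ,reg} = ∪_{w ∈ W} w(C_ℝ)`. -/
def titsConeReg (A : Matrix ι ι ℤ) (hA : IsGCM A) : Set (ι → ℝ) :=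
  ⋃ w ∈ weylGroup A hA, actR w '' (weylChamber (ι := ι))

/-- The normalized regular subset `Xreg^N = {Z ∈ Xreg : φ^I(Z) = 1/2}`:
the image `Z(I₀)` is a sector `{r e^{iπφ} : r > 0, φ₁ ≤ φ ≤ φ₂}` with
`φ₂ - φ₁ < 1` and midpoint `(φ₁ + φ₂)/2 = 1/2`. -/
def XregN (A : Matrix ι ι ℤ) (hA : IsGCM A) : Set (ι → ℂ) :=
  {Z | Z ∈ Xreg A hA ∧ ∃ φ₁ φ₂ : ℝ, φ₁ ≤ φ₂ ∧ φ₂ - φ₁ < 1 ∧ φ₁ + φ₂ = 1 ∧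
    pairC Z '' (imCone A hA \ {0}) = sector φ₁ φ₂}

/-- The semi-closed upper half-plane `H = ℍ ∪ ℝ_{<0}`. -/
def semiClosedH : Set ℂ := {z | 0 < z.im} ∪ {z | z.im = 0 ∧ z.re < 0}

/-- The normalized complexified Weyl chamber
`C^N = {Z ∈ Xreg^N : Z(α i) ∈ H for all i}`. -/
def CN (A : Matrix ι ι ℤ) (hA : IsGCM A) : Set (ι → ℂ) :=
  {Z | Z ∈ XregN A hA ∧ ∀ i, Z i ∈ semiClosedH}

/-- The regular subset of the complexified Tits cone:
`T_reg = {Z ∈ Xreg : Z(I₀) ⊆ ℍ}`. -/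
def Treg (A : Matrix ι ι ℤ) (hA : IsGCM A) : Set (ι → ℂ) :=
  {Z | Z ∈ Xreg A hA ∧ ∀ l ∈ imCone A hA \ {0}, 0 < (pairC Z l).im}

open Classical in
/-- The phase `φ^I(Z)` of the imaginary cone with respect to `Z`, normalized by its
representative with `0 < φ₁`, `φ₂ < 1` (which exists and is unique when `Z(I₀) ⊆ ℍ`). -/
def phaseI (A : Matrix ι ι ℤ) (hA : IsGCM A) (Z : ι → ℂ) : ℝ :=
  if h : ∃ p : ℝ × ℝ, p.1 ≤ p.2 ∧ p.2 - p.1 < 1 ∧ 0 < p.1 ∧ p.2 < 1 ∧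
      pairC Z '' (imCone A hA \ {0}) = sector p.1 p.2
  then (h.choose.1 + h.choose.2) / 2 else 0

/-- The retraction `h_t(Z) = e^{iπt(1/2 - φ^I(Z))} · Z`. -/
def hRetract (A : Matrix ι ι ℤ) (hA : IsGCM A) (t : ℝ) (Z : ι → ℂ) : ι → ℂ :=
  Complex.exp (Real.pi * t * (1 / 2 - phaseI A hA Z) * Complex.I) • Z

/-- The wall `W_{i,+}`. -/
def wallPlus (A : Matrix ι ι ℤ) (hA : IsGCM A) (i : ι) : Set (ι → ℂ) :=
  {Z | Z ∈ XregN A hA ∧ ((Z i).im = 0 ∧ 0 < (Z i).re) ∧ ∀ j, j ≠ i → 0 < (Z j).im}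

/-- The wall `W_{i,-}`. -/
def wallMinus (A : Matrix ι ι ℤ) (hA : IsGCM A) (i : ι) : Set (ι → ℂ) :=
  {Z | Z ∈ XregN A hA ∧ ((Z i).im = 0 ∧ (Z i).re < 0) ∧ ∀ j, j ≠ i → 0 < (Z j).im}

/-- The defining relations of the Artin group attached to a symmetric GCM:
`σ i σ j = σ j σ i` if `a i j = 0` and `σ i σ j σ i = σ j σ i σ j` if `a i j = -1`. -/
def artinRels (A : Matrix ι ι ℤ) : Set (FreeGroup ι) :=
  {r | ∃ i j : ι,
    (A i j = 0 ∧ r = FreeGroup.of i * FreeGroup.of j *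
      (FreeGroup.of j * FreeGroup.of i)⁻¹) ∨
    (A i j = -1 ∧ r = FreeGroup.of i * FreeGroup.of j * FreeGroup.of i *
      (FreeGroup.of j * FreeGroup.of i * FreeGroup.of j)⁻¹)}

/-- The Artin group attached to a symmetric GCM. -/
def ArtinGroup (A : Matrix ι ι ℤ) := PresentedGroup (artinRels A)

instance (A : Matrix ι ι ℤ) : Group (ArtinGroup A) :=
  inferInstanceAs (Group (PresentedGroup (artinRels A)))

lemma IsGCM.submatrix {κ : Type*} [Fintype κ] [DecidableEq κ] {A : Matrix ι ι ℤ}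
    (hA : IsGCM A) (f : κ → ι) (hf : Function.Injective f) :
    IsGCM (A.submatrix f f) :=
  ⟨hA.1.submatrix f, fun i => hA.2.1 (f i),
    fun i j hij => hA.2.2 _ _ fun h => hij (hf h)⟩


section AuxWeyl

set_option linter.unusedSectionVars false

variable (A : Matrix ι ι ℤ) (hA : IsGCM A)

-- basic action lemmas
lemma corootFn_apply (i : ι) (x : ι → ℤ) : corootFn A i x = ∑ j, x j * A j i := rfl

lemma corootFn_sroot' (i j : ι) : corootFn A i (sroot j) = A j i := by
  rw [corootFn_apply]
  have h : ∀ k, (sroot j) k * A k i = if k = j then A k i else 0 := by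
    intro k; by_cases h : k = j <;> simp [sroot, Pi.single_apply, h]
  simp [h]

lemma srefl_apply (i : ι) (x : ι → ℤ) :
    srefl A hA i x = x - corootFn A i x • sroot i := by
  simp [srefl, Module.reflection_apply]

lemma srefl_sroot_self (i : ι) : srefl A hA i (sroot i) = -sroot i :=
  Module.reflection_apply_self _

lemma srefl_sroot (i j : ι) : srefl A hA i (sroot j) = sroot j - A j i • sroot i := by
  rw [srefl_apply, corootFn_sroot']

lemma srefl_srefl (i : ι) (x : ι → ℤ) : srefl A hA i (srefl A hA i x) = x :=
  Module.involutive_reflection (corootFn_sroot A hA i) x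


lemma srefl_mul_self (i : ι) : srefl A hA i * srefl A hA i = 1 := by
  apply LinearEquiv.toLinearMap_injective
  apply LinearMap.ext
  intro x
  simpa using srefl_srefl A hA i x

lemma srefl_inv (i : ι) : (srefl A hA i)⁻¹ = srefl A hA i :=
  inv_eq_of_mul_eq_one_left (srefl_mul_self A hA i)

/-- product of a word -/
def P (l : List ι) : (ι → ℤ) ≃ₗ[ℤ] (ι → ℤ) := (l.map (srefl A hA)).prod

@[simp] lemma P_nil : P A hA [] = 1 := rfl

@[simp] lemma P_cons (x : ι) (l : List ι) : P A hA (x :: l) = srefl A hA x * P A hA l := by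
  simp [P]

lemma P_append (l₁ l₂ : List ι) : P A hA (l₁ ++ l₂) = P A hA l₁ * P A hA l₂ := by
  simp [P]

lemma P_concat (l : List ι) (x : ι) : P A hA (l ++ [x]) = P A hA l * srefl A hA x := by
  simp [P_append, P]

lemma P_reverse (l : List ι) : P A hA l.reverse = (P A hA l)⁻¹ := by
  induction l with
  | nil => simp
  | cons x l ih =>
      rw [List.reverse_cons, P_concat, ih, P_cons, mul_inv_rev, srefl_inv]

lemma P_mem (l : List ι) : P A hA l ∈ weylGroup A hA := by
  induction l with
  | nil => exact one_mem _
  | cons x l ih =>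
      rw [P_cons]
      exact mul_mem (Subgroup.subset_closure ⟨x, rfl⟩) ih

lemma mem_weylGroup_iff {w : (ι → ℤ) ≃ₗ[ℤ] (ι → ℤ)} :
    w ∈ weylGroup A hA ↔ ∃ l : List ι, P A hA l = w := by
  constructor
  · intro hw
    induction hw using Subgroup.closure_induction with
    | mem x hx => obtain ⟨i, rfl⟩ := hx; exact ⟨[i], by simp [P]⟩
    | one => exact ⟨[], rfl⟩
    | mul x y _ _ hx hy =>
        obtain ⟨l₁, rfl⟩ := hx; obtain ⟨l₂, rfl⟩ := hy
        exact ⟨l₁ ++ l₂, P_append A hA l₁ l₂⟩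
    | inv x _ hx =>
        obtain ⟨l, rfl⟩ := hx
        exact ⟨l.reverse, P_reverse A hA l⟩
  · rintro ⟨l, rfl⟩; exact P_mem A hA l

/-- word length -/
def len (w : (ι → ℤ) ≃ₗ[ℤ] (ι → ℤ)) : ℕ := sInf {n | ∃ l : List ι, P A hA l = w ∧ l.length = n}

lemma len_le {w : (ι → ℤ) ≃ₗ[ℤ] (ι → ℤ)} {l : List ι} (h : P A hA l = w) :
    len A hA w ≤ l.length := Nat.sInf_le ⟨l, h, rfl⟩

lemma exists_min_word {w : (ι → ℤ) ≃ₗ[ℤ] (ι → ℤ)} (hw : w ∈ weylGroup A hA) :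
    ∃ l : List ι, P A hA l = w ∧ l.length = len A hA w := by
  have hne : {n | ∃ l : List ι, P A hA l = w ∧ l.length = n}.Nonempty := by
    obtain ⟨l, hl⟩ := (mem_weylGroup_iff A hA).1 hw
    exact ⟨l.length, l, hl, rfl⟩
  exact Nat.sInf_mem hne

lemma len_one : len A hA 1 = 0 :=
  Nat.le_zero.1 (len_le A hA (P_nil A hA))

lemma eq_one_of_len_zero {w : (ι → ℤ) ≃ₗ[ℤ] (ι → ℤ)} (hw : w ∈ weylGroup A hA)
    (h : len A hA w = 0) : w = 1 := by
  obtain ⟨l, hl, hlen⟩ := exists_min_word A hA hw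
  rw [h] at hlen
  rw [List.length_eq_zero_iff] at hlen
  subst hlen; simpa using hl.symm

lemma len_mul_word_le {w : (ι → ℤ) ≃ₗ[ℤ] (ι → ℤ)} (hw : w ∈ weylGroup A hA) (l : List ι) :
    len A hA (w * P A hA l) ≤ len A hA w + l.length := by
  obtain ⟨m, hm, hmlen⟩ := exists_min_word A hA hw
  have : P A hA (m ++ l) = w * P A hA l := by rw [P_append, hm]
  calc len A hA (w * P A hA l) ≤ (m ++ l).length := len_le A hA this
    _ = len A hA w + l.length := by simp [hmlen]

lemma len_mul_srefl_le {w : (ι → ℤ) ≃ₗ[ℤ] (ι → ℤ)} (hw : w ∈ weylGroup A hA) (s : ι) :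
    len A hA (w * srefl A hA s) ≤ len A hA w + 1 := by
  have := len_mul_word_le A hA hw [s]
  simpa [P] using this


lemma det_srefl (i : ι) :
    LinearMap.det ((srefl A hA i : (ι → ℤ) ≃ₗ[ℤ] (ι → ℤ)) : (ι → ℤ) →ₗ[ℤ] (ι → ℤ)) = -1 := by
  rw [← LinearMap.det_toMatrix (Pi.basisFun ℤ ι)]
  have hM : LinearMap.toMatrix (Pi.basisFun ℤ ι) (Pi.basisFun ℤ ι)
      ((srefl A hA i : (ι → ℤ) ≃ₗ[ℤ] (ι → ℤ)) : (ι → ℤ) →ₗ[ℤ] (ι → ℤ)) =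
      1 + Matrix.replicateCol Unit (fun k => -(sroot i k)) * Matrix.replicateRow Unit (fun j => A j i) := by
    ext k j
    rw [LinearMap.toMatrix_apply]
    simp only [Pi.basisFun_apply, Pi.basisFun_repr, LinearEquiv.coe_coe]
    have : srefl A hA i (Pi.single j 1) = sroot j - A j i • sroot i := srefl_sroot A hA i j
    rw [this]
    simp [sroot, Matrix.one_apply, Matrix.mul_apply, Pi.single_apply, mul_comm]
    by_cases h : k = j <;> simp [h] <;> ring
  rw [hM, Matrix.det_one_add_replicateCol_mul_replicateRow]
  simp [dotProduct, sroot, Pi.single_apply, hA.2.1 i]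

lemma det_P (l : List ι) :
    LinearMap.det ((P A hA l : (ι → ℤ) ≃ₗ[ℤ] (ι → ℤ)) : (ι → ℤ) →ₗ[ℤ] (ι → ℤ)) =
      (-1 : ℤ) ^ l.length := by
  induction l with
  | nil => simp [P]
  | cons x l ih =>
      rw [P_cons]
      have : ((srefl A hA x * P A hA l : (ι → ℤ) ≃ₗ[ℤ] (ι → ℤ)) :
          (ι → ℤ) →ₗ[ℤ] (ι → ℤ)) =
          ((srefl A hA x : (ι → ℤ) ≃ₗ[ℤ] (ι → ℤ)) : (ι → ℤ) →ₗ[ℤ] (ι → ℤ)) ∘ₗ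
          ((P A hA l : (ι → ℤ) ≃ₗ[ℤ] (ι → ℤ)) : (ι → ℤ) →ₗ[ℤ] (ι → ℤ)) := rfl
      rw [this, LinearMap.det_comp, det_srefl, ih]
      simp [pow_succ]

lemma parity_eq {l₁ l₂ : List ι} (h : P A hA l₁ = P A hA l₂) :
    l₁.length % 2 = l₂.length % 2 := by
  have hd : ((-1 : ℤ)) ^ l₁.length = (-1 : ℤ) ^ l₂.length := by
    rw [← det_P A hA l₁, ← det_P A hA l₂, h]
  rcases Nat.even_or_odd l₁.length with h1 | h1 <;>
    rcases Nat.even_or_odd l₂.length with h2 | h2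
  · rw [Nat.even_iff.1 h1, Nat.even_iff.1 h2]
  · exfalso; rw [h1.neg_one_pow, h2.neg_one_pow] at hd; norm_num at hd
  · exfalso; rw [h1.neg_one_pow, h2.neg_one_pow] at hd; norm_num at hd
  · rw [Nat.odd_iff.1 h1, Nat.odd_iff.1 h2]

lemma len_mul_srefl_ne {w : (ι → ℤ) ≃ₗ[ℤ] (ι → ℤ)} (hw : w ∈ weylGroup A hA) (s : ι) :
    len A hA (w * srefl A hA s) ≠ len A hA w := by
  obtain ⟨l₁, hl₁, hn₁⟩ := exists_min_word A hA
    (mul_mem hw (Subgroup.subset_closure ⟨s, rfl⟩))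
  obtain ⟨l₂, hl₂, hn₂⟩ := exists_min_word A hA hw
  intro heq
  have : P A hA l₁ = P A hA (l₂ ++ [s]) := by
    rw [P_concat, hl₂, hl₁]
  have hp := parity_eq A hA this
  rw [List.length_append] at hp
  simp only [List.length_singleton] at hp
  omega

lemma mul_apply (f g : (ι → ℤ) ≃ₗ[ℤ] (ι → ℤ)) (v : ι → ℤ) : (f * g) v = f (g v) := rfl

include hA in
lemma A_symm (s t : ι) : A t s = A s t := by
  have h := hA.1
  rw [Matrix.IsSymm] at h
  calc A t s = A.transpose s t := rfl
    _ = A s t := by rw [h]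

/-- Reduce any word to one with no adjacent equal letters. -/
lemma alt_reduce : ∀ l : List ι, ∃ l' : List ι, l'.Chain' (· ≠ ·) ∧
    l'.length ≤ l.length ∧ (∀ x ∈ l', x ∈ l) ∧ P A hA l' = P A hA l := by
  intro l
  induction l with
  | nil => exact ⟨[], List.isChain_nil, by simp, by simp, rfl⟩
  | cons x r ih =>
      obtain ⟨r', hc, hlen, hmem, hP⟩ := ih
      match r', hc with
      | [], _ => exact ⟨[x], List.isChain_singleton _, by simp, by simp, by rw [P_cons, P_cons, hP]⟩
      | y :: r'', hc =>
          by_cases hxy : x = y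
          · refine ⟨r'', hc.tail, ?_, ?_, ?_⟩
            · have := hlen; simp at this ⊢; omega
            · intro z hz; exact List.mem_cons_of_mem _ (hmem z (List.mem_cons_of_mem _ hz))
            · subst hxy
              calc P A hA r'' = (srefl A hA x * srefl A hA x) * P A hA r'' := by
                    rw [srefl_mul_self, one_mul]
                _ = srefl A hA x * P A hA (x :: r'') := by rw [mul_assoc, P_cons]
                _ = srefl A hA x * P A hA r := by rw [hP]
                _ = P A hA (x :: r) := (P_cons A hA x r).symm
          · refine ⟨x :: y :: r'', List.isChain_cons_cons.2 ⟨hxy, hc⟩, by simpa using hlen, ?_, ?_⟩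
            · intro z hz
              rcases List.mem_cons.1 hz with rfl | hz
              · exact List.mem_cons_self
              · exact List.mem_cons_of_mem _ (hmem z hz)
            · calc P A hA (x :: y :: r'') = srefl A hA x * P A hA (y :: r'') :=
                    P_cons A hA x _
                _ = srefl A hA x * P A hA r := by rw [hP]
                _ = P A hA (x :: r) := (P_cons A hA x r).symm

lemma srefl_span_s (s t : ι) (p q : ℤ) :
    srefl A hA s (p • sroot s + q • sroot t) =
      (-(A s t) * q - p) • sroot s + q • sroot t := by
  rw [map_add, map_smul, map_smul, srefl_sroot_self, srefl_sroot, A_symm A hA s t]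
  module

lemma srefl_span_t (s t : ι) (p q : ℤ) :
    srefl A hA t (p • sroot s + q • sroot t) =
      p • sroot s + (-(A s t) * p - q) • sroot t := by
  rw [map_add, map_smul, map_smul, srefl_sroot_self, srefl_sroot]
  module

/-- positivity for alternating words not ending in `s`, in the case `A s t ≤ -2` -/
lemma pos_lemma (s t : ι) (hst : s ≠ t) (hb : A s t ≤ -2) :
    ∀ l : List ι, l.Chain' (· ≠ ·) → (∀ x ∈ l, x = s ∨ x = t) →
    l.getLast? ≠ some s →
    ∃ p q : ℤ, 0 ≤ p ∧ 0 ≤ q ∧ P A hA l (sroot s) = p • sroot s + q • sroot t ∧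
      (l.head? = some s → q ≤ p) ∧ (l.head? = some t → p ≤ q) := by
  intro l
  induction l with
  | nil =>
      intro _ _ _
      refine ⟨1, 0, by norm_num, by norm_num, by simp [P_nil], by simp, by simp⟩
  | cons x r ih =>
      intro hc hmem hlast
      rcases r with - | ⟨y, r'⟩
      · -- singleton [x]; then x = t
        have hx : x = t := by
          rcases hmem x (List.mem_cons_self) with hx | hx
          · exact absurd hx (by simpa using hlast)
          · exact hx
        have hx' : t = x := hx.symm
        subst hx'
        refine ⟨1, -(A s t), by norm_num, by omega, ?_,
          fun h => absurd (by simpa using h) (Ne.symm hst), fun _ => by omega⟩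
        rw [P_cons, P_nil, mul_one, srefl_sroot A hA t s]
        module
      · -- l = x :: y :: r'
        have hxy : x ≠ y := (List.isChain_cons_cons.1 hc).1
        have hcr : (y :: r').Chain' (· ≠ ·) := (List.isChain_cons_cons.1 hc).2
        have hmemr : ∀ z ∈ y :: r', z = s ∨ z = t := fun z hz =>
          hmem z (List.mem_cons_of_mem _ hz)
        have hlastr : (y :: r').getLast? ≠ some s := by
          rwa [List.getLast?_cons_cons] at hlast
        obtain ⟨p', q', hp', hq', heq', hhs', hht'⟩ := ih hcr hmemr hlastr
        rcases hmem x (List.mem_cons_self) with hx | hx <;>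
          [(have hx' : s = x := hx.symm; subst hx'); (have hx' : t = x := hx.symm; subst hx')]
        · -- x = s, so y = t
          have hy : y = t := by
            rcases hmemr y (List.mem_cons_self) with hy | hy
            · exact absurd hy.symm hxy
            · exact hy
          have hpq : p' ≤ q' := hht' (by rw [hy]; simp)
          refine ⟨-(A s t) * q' - p', q', by nlinarith, hq',
            ?_, fun _ => by nlinarith, by simp [hst]⟩
          rw [P_cons, mul_apply, heq', srefl_span_s A hA s t]
        · -- x = t, so y = s
          have hy : y = s := by
            rcases hmemr y (List.mem_cons_self) with hy | hy
            · exact hy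
            · exact absurd hy.symm hxy
          have hpq : q' ≤ p' := hhs' (by rw [hy]; simp)
          refine ⟨p', -(A s t) * p' - q', hp', by nlinarith,
            ?_, by simp [hst.symm], fun _ => by nlinarith⟩
          rw [P_cons, mul_apply, heq', srefl_span_t A hA s t]

lemma corootFn_sub_smul (i j : ι) (c : ℤ) (x : ι → ℤ) :
    corootFn A i (x - c • sroot j) = corootFn A i x - c * A j i := by
  rw [map_sub, map_smul, corootFn_sroot', smul_eq_mul]

include hA in
lemma srefl_comm {s t : ι} (ha : A s t = 0) :
    srefl A hA s * srefl A hA t = srefl A hA t * srefl A hA s := by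
  have hts : A t s = 0 := by rw [A_symm A hA]; exact ha
  apply LinearEquiv.toLinearMap_injective
  apply LinearMap.ext
  intro x
  show srefl A hA s (srefl A hA t x) = srefl A hA t (srefl A hA s x)
  simp only [srefl_apply, corootFn_sub_smul, ha, hts]
  module

include hA in
lemma srefl_braid {s t : ι} (ha : A s t = -1) :
    srefl A hA s * (srefl A hA t * srefl A hA s) =
      srefl A hA t * (srefl A hA s * srefl A hA t) := by
  have hts : A t s = -1 := by rw [A_symm A hA]; exact ha
  apply LinearEquiv.toLinearMap_injective
  apply LinearMap.ext
  intro x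
  show srefl A hA s (srefl A hA t (srefl A hA s x)) =
    srefl A hA t (srefl A hA s (srefl A hA t x))
  simp only [srefl_apply, corootFn_sub_smul, ha, hts, hA.2.1 s, hA.2.1 t]
  module


lemma two_elt {s t x y z : ι} (hx : x = s ∨ x = t) (hy : y = s ∨ y = t)
    (hz : z = s ∨ z = t) (hxy : x ≠ y) (hyz : y ≠ z) : z = x := by
  rcases hx with h|h <;> rcases hy with h'|h' <;> rcases hz with h''|h'' <;>
    subst_vars <;> tauto

include hA in
lemma comm_pair {s t x y : ι} (ha0 : A s t = 0) (hx : x = s ∨ x = t)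
    (hy : y = s ∨ y = t) (hxy : x ≠ y) :
    srefl A hA x * srefl A hA y = srefl A hA y * srefl A hA x := by
  rcases hx with h|h <;> rcases hy with h'|h' <;> subst_vars
  · exact absurd rfl hxy
  · exact srefl_comm A hA ha0
  · exact (srefl_comm A hA ha0).symm
  · exact absurd rfl hxy

include hA in
lemma braid_pair {s t x y : ι} (ha1 : A s t = -1) (hx : x = s ∨ x = t)
    (hy : y = s ∨ y = t) (hxy : x ≠ y) :
    srefl A hA x * (srefl A hA y * srefl A hA x) =
      srefl A hA y * (srefl A hA x * srefl A hA y) := by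
  have hts : A t s = -1 := by rw [A_symm A hA]; exact ha1
  rcases hx with h|h <;> rcases hy with h'|h' <;> subst_vars
  · exact absurd rfl hxy
  · exact srefl_braid A hA ha1
  · exact srefl_braid A hA hts
  · exact absurd rfl hxy

/-- the conclusion of the dihedral lemma -/
def Dstmt (s t : ι) (lu : List ι) : Prop :=
  (∃ c₁ c₂ : ℤ, 0 ≤ c₁ ∧ 0 ≤ c₂ ∧
    P A hA lu (sroot s) = c₁ • sroot s + c₂ • sroot t) ∨
  (∃ lu₂ : List ι, (∀ x ∈ lu₂, x = s ∨ x = t) ∧ lu₂.length ≤ lu.length ∧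
    P A hA lu₂ = P A hA lu * srefl A hA s)

lemma Dstmt_translate {s t : ι} {l₁ l₂ : List ι} (h : Dstmt A hA s t l₁)
    (hP : P A hA l₁ = P A hA l₂) (hlen : l₁.length ≤ l₂.length)
    (hmem : ∀ x ∈ l₁, x = s ∨ x = t) :
    Dstmt A hA s t l₂ := by
  rcases h with ⟨c₁, c₂, h1, h2, h3⟩ | ⟨lu₂, hm, hl, hp⟩
  · exact Or.inl ⟨c₁, c₂, h1, h2, by rw [← hP]; exact h3⟩
  · exact Or.inr ⟨lu₂, hm, le_trans hl hlen, by rw [← hP]; exact hp⟩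

lemma Dstmt_dropLast {s t : ι} {l : List ι} (hne : l ≠ [])
    (hlast : l.getLast hne = s) (hmem : ∀ x ∈ l, x = s ∨ x = t) :
    Dstmt A hA s t l := by
  refine Or.inr ⟨l.dropLast, ?_, ?_, ?_⟩
  · intro x hx; exact hmem x (List.dropLast_subset l hx)
  · simp [List.length_dropLast]
  · have hl : l.dropLast ++ [s] = l := by
      conv_rhs => rw [← List.dropLast_append_getLast hne]
      rw [hlast]
    have : P A hA l = P A hA l.dropLast * srefl A hA s := by
      conv_lhs => rw [← hl]
      rw [P_concat]
    rw [this, mul_assoc, srefl_mul_self, mul_one]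

/-- the dihedral lemma -/
lemma dihedral (s t : ι) (hst : s ≠ t) :
    ∀ n : ℕ, ∀ lu : List ι, lu.length ≤ n → (∀ x ∈ lu, x = s ∨ x = t) →
    Dstmt A hA s t lu := by
  have hcone : ∀ l : List ι, l = [] ∨ l = [t] →
      Dstmt A hA s t l := by
    rintro l (rfl | rfl)
    · exact Or.inl ⟨1, 0, by norm_num, by norm_num, by simp [P_nil]⟩
    · refine Or.inl ⟨1, -(A s t), by norm_num, by
        have := hA.2.2 s t hst; omega, ?_⟩
      rw [P_cons, P_nil, mul_one, srefl_sroot A hA t s]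
      module
  intro n
  induction n with
  | zero =>
      intro lu hlen _
      rw [Nat.le_zero, List.length_eq_zero_iff] at hlen
      exact hcone lu (Or.inl hlen)
  | succ n ih =>
      intro lu hlen hmem
      -- reduce to an alternating word
      obtain ⟨l, hc, hl, hsub, hP⟩ := alt_reduce A hA lu
      have hmeml : ∀ x ∈ l, x = s ∨ x = t := fun x hx => hmem x (hsub x hx)
      by_cases hshort : l.length ≤ n
      · exact Dstmt_translate A hA (ih l hshort hmeml) hP hl hmeml
      -- l is alternating of full length n+1 ≥ 1
      have hllen : l.length = n + 1 := by omega
      have hlne : l ≠ [] := by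
        intro h; rw [h] at hllen; simp at hllen
      -- case on the last letter
      rcases hmeml _ (List.getLast_mem hlne) with hlast | hlast
      · exact Dstmt_translate A hA (Dstmt_dropLast A hA hlne hlast hmeml) hP hl hmeml
      -- last letter is t
      rcases le_or_gt (A s t) (-2) with hb | hb
      · -- infinite dihedral case
        have hlast? : l.getLast? ≠ some s := by
          rw [List.getLast?_eq_getLast hlne, hlast]
          simp [Ne.symm hst]
        obtain ⟨p, q, hp, hq, heq, -, -⟩ := pos_lemma A hA s t hst hb l hc hmeml hlast?
        exact Dstmt_translate A hA (Or.inl ⟨p, q, hp, hq, heq⟩) hP hl hmeml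
      · -- A s t = 0 or -1
        have ha : A s t = 0 ∨ A s t = -1 := by
          have := hA.2.2 s t hst; omega
        rcases l with - | ⟨x, l1⟩
        · exact absurd rfl hlne
        rcases l1 with - | ⟨y, l2⟩
        · -- l = [x]
          have hx : t = x := by simpa [List.getLast] using hlast.symm
          subst hx
          exact Dstmt_translate A hA (hcone [t] (Or.inr rfl)) hP hl hmeml
        have hxy : x ≠ y := (List.isChain_cons_cons.1 hc).1
        rcases l2 with - | ⟨z, r⟩
        · -- l = [x, y]
          have hy : t = y := by simpa [List.getLast] using hlast.symm
          subst hy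
          have hx : s = x := by
            rcases hmeml x (by simp) with h|h
            · exact h.symm
            · exact absurd h hxy
          subst hx
          rcases ha with ha0 | ha1
          · -- commuting case : drop to [t]
            refine Dstmt_translate A hA (Or.inr ⟨[t], by simp, by simp, ?_⟩) hP hl hmeml
            have hcomm := srefl_comm A hA ha0
            simp only [P_cons, P_nil, mul_one]
            rw [hcomm, mul_assoc, srefl_mul_self, mul_one]
          · -- braid case : positive
            refine Dstmt_translate A hA (Or.inl ⟨0, 1, le_refl 0, by norm_num, ?_⟩)
              hP hl hmeml
            have hts : A t s = -1 := by rw [A_symm A hA]; exact ha1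
            rw [P_cons, P_cons, P_nil, mul_one, mul_apply, srefl_sroot A hA t s,
              map_sub, map_smul, srefl_sroot_self, srefl_sroot A hA s t, ha1, hts]
            module
        · -- l = x :: y :: z :: r
          have hyz : y ≠ z := (List.isChain_cons_cons.1 (List.isChain_cons_cons.1 hc).2).1
          have hz : x = z := (two_elt (hmeml x (by simp)) (hmeml y (by simp))
            (hmeml z (by simp)) hxy hyz).symm
          subst hz
          rcases ha with ha0 | ha1
          · -- commuting case : x y x r → y r
            have hcomm := comm_pair A hA ha0 (hmeml x (by simp)) (hmeml y (by simp)) hxy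
            have hPr : P A hA (y :: r) = P A hA (x :: y :: x :: r) := by
              rw [P_cons, P_cons, P_cons, P_cons, ← mul_assoc, hcomm, mul_assoc,
                ← mul_assoc (srefl A hA x) (srefl A hA x), srefl_mul_self, one_mul]
            have hlen' : (y :: r).length ≤ n := by
              simp only [List.length_cons] at hllen ⊢; omega
            have hmem' : ∀ u ∈ y :: r, u = s ∨ u = t := by
              intro u hu
              exact hmeml u (by simp at hu ⊢; tauto)
            exact Dstmt_translate A hA (ih _ hlen' hmem')
              (by rw [hPr, hP]) (by simp at hl ⊢; omega) hmem'
          · -- braid case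
            rcases r with - | ⟨w, r'⟩
            · -- l = [x, y, x] = [t, s, t]
              have hx : t = x := by simpa [List.getLast] using hlast.symm
              subst hx
              have hy : s = y := by
                rcases hmeml y (by simp) with h|h
                · exact h.symm
                · exact absurd h (Ne.symm hxy)
              subst hy
              refine Dstmt_translate A hA (Or.inr ⟨[s, t], by simp, by simp, ?_⟩)
                hP hl hmeml
              have hbr := srefl_braid A hA ha1
              simp only [P_cons, P_nil, mul_one]
              rw [← hbr, mul_assoc, mul_assoc, srefl_mul_self, mul_one]
            · -- l = x :: y :: x :: w :: r' with w = y
              have hzw : x ≠ w :=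
                (List.isChain_cons_cons.1 (List.isChain_cons_cons.1 (List.isChain_cons_cons.1 hc).2).2).1
              have hw : y = w := (two_elt (hmeml y (by simp)) (hmeml x (by simp))
                (hmeml w (by simp)) (Ne.symm hxy) hzw).symm
              subst hw
              have hbr := braid_pair A hA ha1 (hmeml x (by simp)) (hmeml y (by simp)) hxy
              have hPr : P A hA (y :: x :: r') = P A hA (x :: y :: x :: y :: r') := by
                rw [P_cons, P_cons, P_cons, P_cons, P_cons, P_cons]
                calc srefl A hA y * (srefl A hA x * P A hA r')
                    = (srefl A hA y * (srefl A hA x * srefl A hA y)) *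
                      (srefl A hA y * P A hA r') := by
                      rw [mul_assoc, mul_assoc, ← mul_assoc (srefl A hA y) (srefl A hA y),
                        srefl_mul_self, one_mul]
                  _ = (srefl A hA x * (srefl A hA y * srefl A hA x)) *
                      (srefl A hA y * P A hA r') := by rw [hbr]
                  _ = srefl A hA x * (srefl A hA y * (srefl A hA x *
                      (srefl A hA y * P A hA r'))) := by
                      rw [mul_assoc, mul_assoc]
              have hlen' : (y :: x :: r').length ≤ n := by
                simp only [List.length_cons] at hllen ⊢; omega
              have hmem' : ∀ u ∈ y :: x :: r', u = s ∨ u = t := by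
                intro u hu
                exact hmeml u (by simp at hu ⊢; tauto)
              exact Dstmt_translate A hA (ih _ hlen' hmem')
                (by rw [hPr, hP]) (by simp at hl ⊢; omega) hmem'

lemma sroot_nonneg (s j : ι) : 0 ≤ sroot s j := by
  unfold sroot
  by_cases h : j = s <;> simp [Pi.single_apply, h]

/-- THE MAIN THEOREM: if `len (w * r_s) > len w` then `w (α_s) ≥ 0`. -/
theorem srefl_pos : ∀ n : ℕ, ∀ w : (ι → ℤ) ≃ₗ[ℤ] (ι → ℤ), w ∈ weylGroup A hA →
    len A hA w ≤ n → ∀ s : ι, len A hA w < len A hA (w * srefl A hA s) →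
    ∀ j, 0 ≤ w (sroot s) j := by
  intro n
  induction n with
  | zero =>
      intro w hw hlen s _ j
      have hw1 : w = 1 := eq_one_of_len_zero A hA hw (Nat.le_zero.1 hlen)
      rw [hw1]
      simpa using sroot_nonneg s j
  | succ n ih =>
      intro w hw hlen s hs j
      rcases Nat.eq_zero_or_pos (len A hA w) with h0 | hpos
      · have hw1 : w = 1 := eq_one_of_len_zero A hA hw h0
        rw [hw1]
        simpa using sroot_nonneg s j
      -- minimal word for w, with last letter t
      obtain ⟨l, hlP, hllen⟩ := exists_min_word A hA hw
      have hlne : l ≠ [] := by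
        intro h; rw [h] at hllen; simp at hllen; omega
      set t := l.getLast hlne with ht
      have hld : l.dropLast ++ [t] = l := List.dropLast_append_getLast hlne
      have hwt : w * srefl A hA t = P A hA l.dropLast := by
        have : P A hA l = P A hA l.dropLast * srefl A hA t := by
          conv_lhs => rw [← hld]
          rw [P_concat]
        rw [← hlP, this, mul_assoc, srefl_mul_self, mul_one]
      have hlenwt : len A hA (w * srefl A hA t) = len A hA w - 1 := by
        have h1 : len A hA (w * srefl A hA t) ≤ len A hA w - 1 := by
          have := len_le A hA hwt.symm
          rw [List.length_dropLast, hllen] at this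
          exact this
        have h2 : len A hA w ≤ len A hA (w * srefl A hA t) + 1 := by
          have h3 := len_mul_srefl_le A hA
            (mul_mem hw (Subgroup.subset_closure ⟨t, rfl⟩)) t
          rwa [mul_assoc, srefl_mul_self, mul_one] at h3
        omega
      have hts : t ≠ s := by
        intro h
        rw [h] at hlenwt
        omega
      -- the minimal coset decomposition
      set Mset : Set ℕ := {m | ∃ lu : List ι, (∀ x ∈ lu, x = s ∨ x = t) ∧
        len A hA (w * (P A hA lu)⁻¹) + lu.length = len A hA w ∧
        m = len A hA (w * (P A hA lu)⁻¹)} with hMset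
      have hPt : P A hA [t] = srefl A hA t := by simp [P]
      have hwit : len A hA (w * srefl A hA t) ∈ Mset := by
        refine ⟨[t], by simp, ?_, ?_⟩
        · rw [hPt, srefl_inv, hlenwt]
          simp
          omega
        · rw [hPt, srefl_inv]
      obtain ⟨lu, hlu_mem, hsum, hm0⟩ := Nat.sInf_mem ⟨_, hwit⟩
      set v := w * (P A hA lu)⁻¹ with hv
      have hvW : v ∈ weylGroup A hA :=
        mul_mem hw (inv_mem (P_mem A hA lu))
      have hw_eq : v * P A hA lu = w := by
        rw [hv, mul_assoc, inv_mul_cancel, mul_one]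
      have hv_lt : len A hA v < len A hA w := by
        have hle : sInf Mset ≤ len A hA (w * srefl A hA t) := Nat.sInf_le hwit
        omega
      -- claim: len (v * r_x) > len v for x = s and x = t
      have claim : ∀ x : ι, x = s ∨ x = t → len A hA v < len A hA (v * srefl A hA x) := by
        intro x hx
        by_contra hcon
        push_neg at hcon
        have hne := len_mul_srefl_ne A hA hvW x
        have hlt : len A hA (v * srefl A hA x) < len A hA v := by omega
        -- produce a smaller element of Mset
        have hmem' : len A hA (v * srefl A hA x) ∈ Mset := by
          refine ⟨x :: lu, ?_, ?_, ?_⟩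
          · intro z hz
            rcases List.mem_cons.1 hz with rfl | hz
            · exact hx
            · exact hlu_mem z hz
          · have hinv : (P A hA (x :: lu))⁻¹ = (P A hA lu)⁻¹ * srefl A hA x := by
              rw [P_cons, mul_inv_rev, srefl_inv]
            rw [hinv, ← mul_assoc, ← hv]
            have hge : len A hA w ≤ len A hA (v * srefl A hA x) + (lu.length + 1) := by
              have hw_eq2 : (v * srefl A hA x) * P A hA (x :: lu) = w := by
                rw [P_cons, ← mul_assoc, mul_assoc v, srefl_mul_self, mul_one, hw_eq]
              have := len_mul_word_le A hA
                (mul_mem hvW (Subgroup.subset_closure ⟨x, rfl⟩)) (x :: lu)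
              rw [hw_eq2] at this
              simpa using this
            have hle2 : len A hA (v * srefl A hA x) + (lu.length + 1) ≤ len A hA w := by
              omega
            simp only [List.length_cons]
            omega
          · have hinv : (P A hA (x :: lu))⁻¹ = (P A hA lu)⁻¹ * srefl A hA x := by
              rw [P_cons, mul_inv_rev, srefl_inv]
            rw [hinv, ← mul_assoc, ← hv]
        have := Nat.sInf_le hmem'
        omega
      -- apply induction hypothesis to v
      have hvs : ∀ j, 0 ≤ v (sroot s) j :=
        ih v hvW (by omega) s (claim s (Or.inl rfl))
      have hvt : ∀ j, 0 ≤ v (sroot t) j :=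
        ih v hvW (by omega) t (claim t (Or.inr rfl))
      -- dihedral lemma
      rcases dihedral A hA s t (Ne.symm hts) lu.length lu le_rfl hlu_mem with
        ⟨c₁, c₂, hc₁, hc₂, heq⟩ | ⟨lu₂, hm2, hl2, hp2⟩
      · have : w (sroot s) = c₁ • v (sroot s) + c₂ • v (sroot t) := by
          rw [← hw_eq, mul_apply, heq, map_add, map_smul, map_smul]
        rw [this]
        simp only [Pi.add_apply, Pi.smul_apply, smul_eq_mul]
        have := hvs j; have := hvt j
        positivity
      · exfalso
        have hws : w * srefl A hA s = v * P A hA lu₂ := by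
          rw [hp2, ← mul_assoc, hw_eq]
        have hle3 : len A hA (w * srefl A hA s) ≤ len A hA v + lu₂.length := by
          rw [hws]; exact len_mul_word_le A hA hvW lu₂
        omega

/-- fundamental set elements have W-orbit in the positive cone -/
lemma bform_sroot (x : ι → ℤ) (i : ι) : bform A x (sroot i) = corootFn A i x := by
  unfold bform
  rw [corootFn_apply]
  congr 1
  ext k
  rw [Finset.sum_eq_single i]
  · simp [sroot]
  · intro b _ hb; simp [sroot, Pi.single_apply, hb]
  · intro h; exact absurd (Finset.mem_univ i) h

/-- orbit of the fundamental set is non-negative -/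
theorem orbit_nonneg : ∀ n : ℕ, ∀ w : (ι → ℤ) ≃ₗ[ℤ] (ι → ℤ), w ∈ weylGroup A hA →
    len A hA w ≤ n → ∀ α ∈ fundamentalSet A, ∀ j, 0 ≤ w α j := by
  intro n
  induction n with
  | zero =>
      intro w hw hlen α hα j
      have hw1 : w = 1 := eq_one_of_len_zero A hA hw (Nat.le_zero.1 hlen)
      rw [hw1]
      simpa using hα.1 j
  | succ n ih =>
      intro w hw hlen α hα j
      rcases Nat.eq_zero_or_pos (len A hA w) with h0 | hpos
      · have hw1 : w = 1 := eq_one_of_len_zero A hA hw h0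
        rw [hw1]
        simpa using hα.1 j
      obtain ⟨l, hlP, hllen⟩ := exists_min_word A hA hw
      have hlne : l ≠ [] := by
        intro h; rw [h] at hllen; simp at hllen; omega
      set t := l.getLast hlne with ht
      have hld : l.dropLast ++ [t] = l := List.dropLast_append_getLast hlne
      have hwt : w * srefl A hA t = P A hA l.dropLast := by
        have : P A hA l = P A hA l.dropLast * srefl A hA t := by
          conv_lhs => rw [← hld]
          rw [P_concat]
        rw [← hlP, this, mul_assoc, srefl_mul_self, mul_one]
      set w' := w * srefl A hA t with hw'
      have hw'W : w' ∈ weylGroup A hA :=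
        mul_mem hw (Subgroup.subset_closure ⟨t, rfl⟩)
      have hlenw' : len A hA w' = len A hA w - 1 := by
        have h1 : len A hA w' ≤ len A hA w - 1 := by
          have := len_le A hA hwt.symm
          rw [List.length_dropLast, hllen] at this
          exact this
        have h2 : len A hA w ≤ len A hA w' + 1 := by
          have h3 := len_mul_srefl_le A hA hw'W t
          rwa [hw', mul_assoc, srefl_mul_self, mul_one] at h3
        omega
      have hw_eq : w = w' * srefl A hA t := by
        rw [hw', mul_assoc, srefl_mul_self, mul_one]
      -- w α = w' α + (-c) • w' (sroot t)
      have hc : corootFn A t α ≤ 0 := by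
        rw [← bform_sroot]; exact hα.2.2.2 t
      have hsplit : w α = w' α + (-(corootFn A t α)) • w' (sroot t) := by
        rw [hw_eq, mul_apply, srefl_apply]
        rw [map_sub, map_smul]
        module
      rw [hsplit]
      have h1 : 0 ≤ w' α j := ih w' hw'W (by omega) α hα j
      have h2 : 0 ≤ w' (sroot t) j := by
        apply srefl_pos A hA n w' hw'W (by omega) t
        · rw [← hw_eq, hlenw']
          omega
      simp only [Pi.add_apply, Pi.smul_apply, smul_eq_mul]
      nlinarith

theorem posImRoots_nonneg {β : ι → ℤ} (hβ : β ∈ posImRoots A hA) (j : ι) : 0 ≤ β j := by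
  obtain ⟨w, hw, α, hα, rfl⟩ := hβ
  exact orbit_nonneg A hA (len A hA w) w hw le_rfl α hα j

lemma fundamentalSet_smul {α : ι → ℤ} (hα : α ∈ fundamentalSet A) (n : ℕ) (hn : 1 ≤ n) :
    (n : ℤ) • α ∈ fundamentalSet A := by
  obtain ⟨h1, h2, h3, h4⟩ := hα
  have hnz : (n : ℤ) ≠ 0 := by positivity
  refine ⟨?_, ?_, ?_, ?_⟩
  · intro i
    simp only [Pi.smul_apply, smul_eq_mul]
    have := h1 i
    positivity
  · intro h
    apply h2
    ext i
    have : (n : ℤ) * α i = 0 := congrFun h i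
    rcases mul_eq_zero.1 this with h' | h'
    · exact absurd h' hnz
    · simpa using h'
  · have hsupp : {i | ((n : ℤ) • α) i ≠ 0} = {i | α i ≠ 0} := by
      ext i
      simp only [Pi.smul_apply, smul_eq_mul, Set.mem_setOf_eq, ne_eq, mul_eq_zero]
      tauto
    rw [hsupp]
    exact h3
  · intro i
    rw [bform_sroot, map_smul, smul_eq_mul]
    have := h4 i
    rw [bform_sroot] at this
    have hn0 : (0:ℤ) ≤ (n : ℤ) := by positivity
    exact mul_nonpos_of_nonneg_of_nonpos hn0 this

lemma posImRoots_smul {β : ι → ℤ} (hβ : β ∈ posImRoots A hA) (n : ℕ) (hn : 1 ≤ n) :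
    (n : ℤ) • β ∈ posImRoots A hA := by
  obtain ⟨w, hw, α, hα, rfl⟩ := hβ
  exact ⟨w, hw, (n : ℤ) • α, fundamentalSet_smul A hα n hn, (map_smul w _ α).symm⟩

theorem imCone_result (hne : (posImRoots A hA).Nonempty) :
    Convex ℝ (imCone A hA) ∧
    (∀ r : ℝ, 0 ≤ r → ∀ x ∈ imCone A hA, r • x ∈ imCone A hA) ∧
    (∀ x ∈ imCone A hA, ∀ i, 0 ≤ x i) := by
  classical
  set S : Set (ι → ℝ) := insert 0 (castR '' posImRoots A hA) with hS
  have hconv : Convex ℝ (convexHull ℝ S) := convex_convexHull ℝ S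
  have h0 : (0 : ι → ℝ) ∈ convexHull ℝ S := subset_convexHull ℝ S (Set.mem_insert _ _)
  have hsmul : ∀ r : ℝ, 0 ≤ r → ∀ y ∈ convexHull ℝ S, r • y ∈ convexHull ℝ S := by
    intro r hr
    have hTconv : Convex ℝ {y : ι → ℝ | r • y ∈ convexHull ℝ S} := by
      intro u hu v hv a b ha hb hab
      simp only [Set.mem_setOf_eq] at hu hv ⊢
      have heq : r • (a • u + b • v) = a • (r • u) + b • (r • v) := by
        rw [smul_add, smul_smul, smul_smul, smul_smul, smul_smul, mul_comm r a, mul_comm r b]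
      rw [heq]
      exact hconv hu hv ha hb hab
    have hST : S ⊆ {y : ι → ℝ | r • y ∈ convexHull ℝ S} := by
      rintro y hy
      rcases Set.mem_insert_iff.1 hy with rfl | ⟨β, hβ, rfl⟩
      · simp only [Set.mem_setOf_eq, smul_zero]; exact h0
      · obtain ⟨nn, hnn⟩ := exists_nat_ge r
        set n : ℕ := nn + 1 with hn
        have hrn : r ≤ (n : ℝ) := by rw [hn]; push_cast; linarith
        have hnpos : (0 : ℝ) < (n : ℝ) := by positivity
        have hmem : castR ((n : ℤ) • β) ∈ S :=
          Set.mem_insert_iff.2 (Or.inr ⟨(n : ℤ) • β,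
            posImRoots_smul A hA hβ n (by omega), rfl⟩)
        have hy2 : castR ((n : ℤ) • β) = (n : ℝ) • castR β := by
          funext i
          simp only [castR, Pi.smul_apply, smul_eq_mul]
          push_cast
          ring
        have key : r • castR β =
            (1 - r / n) • (0 : ι → ℝ) + (r / n) • ((n : ℝ) • castR β) := by
          rw [smul_zero, zero_add, smul_smul]
          congr 1
          field_simp
        simp only [Set.mem_setOf_eq]
        rw [key, ← hy2]
        refine hconv h0 (subset_convexHull ℝ S hmem) ?_ ?_ (by ring)
        · have : r / n ≤ 1 := by
            rw [div_le_one hnpos]; exact hrn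
          linarith
        · positivity
    intro y hy
    exact convexHull_min hST hTconv hy
  refine ⟨Convex.closure hconv, ?_, ?_⟩
  · intro r hr x hx
    have hcont : Continuous fun y : ι → ℝ => r • y := continuous_const_smul r
    have himg := image_closure_subset_closure_image (s := convexHull ℝ S) hcont
    have hx2 : r • x ∈ (fun y : ι → ℝ => r • y) '' closure (convexHull ℝ S) :=
      ⟨x, hx, rfl⟩
    have hx3 := himg hx2
    refine closure_mono ?_ hx3
    rintro z ⟨y, hy, rfl⟩
    exact hsmul r hr y hy
  · intro x hx i
    have horth_closed : IsClosed {y : ι → ℝ | ∀ i, 0 ≤ y i} := by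
      have : {y : ι → ℝ | ∀ i, 0 ≤ y i} = ⋂ i, {y : ι → ℝ | 0 ≤ y i} := by
        ext y; simp
      rw [this]
      exact isClosed_iInter fun i => isClosed_le continuous_const (continuous_apply i)
    have horth_conv : Convex ℝ {y : ι → ℝ | ∀ i, 0 ≤ y i} := by
      intro u hu v hv a b ha hb hab k
      simp only [Pi.add_apply, Pi.smul_apply, smul_eq_mul]
      have := hu k; have := hv k
      positivity
    have hSorth : S ⊆ {y : ι → ℝ | ∀ i, 0 ≤ y i} := by
      rintro y hy
      rcases Set.mem_insert_iff.1 hy with rfl | ⟨β, hβ, rfl⟩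
      · intro k; simp
      · intro k
        have hb := posImRoots_nonneg A hA hβ k
        simp only [castR]
        exact_mod_cast hb
    exact closure_minimal (convexHull_min hSorth horth_conv) horth_closed hx i

end AuxWeyl

/-- if `Δ^im_+ ≠ ∅`, the imaginary cone `I` is a convex cone contained in
`∑ ℝ_{≥0} α_i`. -/
theorem imCone_convex_cone_subset_nonneg (A : Matrix ι ι ℤ) (hA : IsGCM A)
    (hne : (posImRoots A hA).Nonempty) :
    Convex ℝ (imCone A hA) ∧
    (∀ r : ℝ, 0 ≤ r → ∀ x ∈ imCone A hA, r • x ∈ imCone A hA) ∧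
    (∀ x ∈ imCone A hA, ∀ i, 0 ≤ x i) :=
  imCone_result A hA hne

end KacMoodyStab
end
end

section
/- The subset X = V \ ∪_{λ∈I₀} H_λ is an open subset of V (with the Euclidean topology on V ≅ ℂ^n). -/
open scoped BigOperators

noncomputable section

namespace KacMoodyStab

variable {ι : Type*} [Fintype ι] [DecidableEq ι]

open Pointwise in
lemma fundamentalSet_nsmul' (A : Matrix ι ι ℤ) {α : ι → ℤ} (hα : α ∈ fundamentalSet A)
    {n : ℕ} (hn : 1 ≤ n) : (n : ℤ) • α ∈ fundamentalSet A := by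
  obtain ⟨h1, h2, h3, h4⟩ := hα
  have hn0 : (n : ℤ) ≠ 0 := Int.natCast_ne_zero.mpr (Nat.one_le_iff_ne_zero.mp hn)
  refine ⟨fun i => ?_, ?_, ?_, fun i => ?_⟩
  · have : (0:ℤ) ≤ (n:ℤ) * α i := mul_nonneg (by positivity) (h1 i)
    simpa using this
  · simp only [ne_eq, smul_eq_zero, hn0, false_or]
    exact h2
  · have hset : {i | ((n:ℤ) • α) i ≠ 0} = {i | α i ≠ 0} := by
      ext i; simp [hn0, Nat.one_le_iff_ne_zero.mp hn]
    rw [hset]; exact h3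
  · have : bform A ((n:ℤ) • α) (sroot i) = (n:ℤ) * bform A α (sroot i) := by
      simp [bform, Finset.mul_sum, mul_assoc]
    rw [this]
    exact mul_nonpos_of_nonneg_of_nonpos (by positivity) (h4 i)

lemma posImRoots_nsmul' (A : Matrix ι ι ℤ) (hA : IsGCM A) {β : ι → ℤ}
    (hβ : β ∈ posImRoots A hA) {n : ℕ} (hn : 1 ≤ n) : (n : ℤ) • β ∈ posImRoots A hA := by
  obtain ⟨w, hw, α, hα, rfl⟩ := hβ
  exact ⟨w, hw, (n:ℤ) • α, fundamentalSet_nsmul' A hα hn, (map_smul w _ _).symm⟩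

lemma castR_intsmul' (n : ℕ) (α : ι → ℤ) : castR ((n : ℤ) • α) = (n : ℝ) • castR α := by
  ext i; simp [castR]

open Pointwise in
lemma imCone_smul_mem' (A : Matrix ι ι ℤ) (hA : IsGCM A) {c : ℝ} (hc : 0 < c)
    {l : ι → ℝ} (hl : l ∈ imCone A hA) : c • l ∈ imCone A hA := by
  set C : Set (ι → ℝ) := convexHull ℝ (insert 0 (castR '' posImRoots A hA)) with hC
  have hstep : ∀ x ∈ C, c • x ∈ C := by
    intro x hx
    set n := ⌈c⌉₊ with hndef
    have hn1 : 1 ≤ n := Nat.one_le_ceil_iff.mpr hc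
    have hnpos : (0:ℝ) < (n:ℝ) := by exact_mod_cast Nat.lt_of_lt_of_le Nat.zero_lt_one hn1
    have hsub : (n:ℝ) • insert (0 : ι → ℝ) (castR '' posImRoots A hA) ⊆
        insert (0 : ι → ℝ) (castR '' posImRoots A hA) := by
      rintro _ ⟨y, hy, rfl⟩
      rcases hy with rfl | ⟨β, hβ, rfl⟩
      · simp
      · exact Set.mem_insert_iff.mpr (Or.inr ⟨(n:ℤ) • β, posImRoots_nsmul' A hA hβ hn1,
          castR_intsmul' n β⟩)
    have hnx : (n:ℝ) • x ∈ C := by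
      have h1 : (n:ℝ) • x ∈ (n:ℝ) • C := Set.smul_mem_smul_set hx
      rw [hC, ← convexHull_smul] at h1
      exact convexHull_mono hsub h1
    have heq : c • x = (c / (n:ℝ)) • ((n:ℝ) • x) := by
      rw [smul_smul]; congr 1; field_simp
    rw [heq]
    refine (convex_convexHull ℝ _).smul_mem_of_zero_mem
      (subset_convexHull ℝ _ (Set.mem_insert _ _)) hnx ⟨by positivity, ?_⟩
    rw [div_le_one hnpos]
    exact Nat.le_ceil c
  have h1 : c • l ∈ (fun x => c • x) '' closure C := ⟨l, hl, rfl⟩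
  have h2 := image_closure_subset_closure_image (f := fun x : ι → ℝ => c • x)
    (continuous_const_smul c) h1
  refine closure_mono ?_ h2
  rintro _ ⟨x, hx, rfl⟩
  exact hstep x hx

lemma pairC_smul' (Z : ι → ℂ) (c : ℝ) (l : ι → ℝ) :
    pairC Z (c • l) = (c : ℂ) * pairC Z l := by
  simp only [pairC, Pi.smul_apply, smul_eq_mul, Complex.ofReal_mul, Finset.mul_sum]
  exact Finset.sum_congr rfl fun i _ => by ring

/-- `X = V \\ ∪_{λ ∈ I₀} H_λ` is open. -/
theorem isOpen_Xset (A : Matrix ι ι ℤ) (hA : IsGCM A) :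
    IsOpen (Xset A hA) := by
  set K₀ : Set (ι → ℝ) := imCone A hA ∩ Metric.sphere (0 : ι → ℝ) 1 with hK₀def
  have hclosed : IsClosed (imCone A hA) := isClosed_closure
  have hK₀ : IsCompact K₀ := (isCompact_sphere (0 : ι → ℝ) 1).inter_left hclosed
  have hXeq : Xset A hA = {Z | ∀ l ∈ K₀, pairC Z l ≠ 0} := by
    ext Z
    constructor
    · intro hZ l hl
      refine hZ l ⟨hl.1, ?_⟩
      have : ‖l‖ = 1 := by simpa using hl.2
      simp only [Set.mem_singleton_iff]
      intro h
      rw [h] at this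
      simp at this
    · rintro hZ l ⟨hl1, hl0⟩
      have hlne : l ≠ 0 := by simpa using hl0
      have hpos : (0:ℝ) < ‖l‖ := norm_pos_iff.mpr hlne
      have hmem : ‖l‖⁻¹ • l ∈ K₀ := by
        refine ⟨imCone_smul_mem' A hA (inv_pos.mpr hpos) hl1, ?_⟩
        simp [norm_smul, abs_of_pos (inv_pos.mpr hpos), inv_mul_cancel₀ hpos.ne']
      have h := hZ _ hmem
      rw [pairC_smul'] at h
      intro h0
      exact h (by rw [h0, mul_zero])
  rw [hXeq]
  have hcont : Continuous fun p : (ι → ℂ) × (ι → ℝ) => pairC p.1 p.2 := by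
    unfold pairC
    exact continuous_finset_sum _ fun i _ =>
      ((continuous_apply i).comp continuous_fst).mul
        (Complex.continuous_ofReal.comp ((continuous_apply i).comp continuous_snd))
  have hU : IsOpen {p : (ι → ℂ) × (ι → ℝ) | pairC p.1 p.2 ≠ 0} := by
    have : {p : (ι → ℂ) × (ι → ℝ) | pairC p.1 p.2 ≠ 0} =
        (fun p : (ι → ℂ) × (ι → ℝ) => pairC p.1 p.2) ⁻¹' {(0:ℂ)}ᶜ := rfl
    rw [this]
    exact isOpen_compl_singleton.preimage hcont
  rw [isOpen_iff_forall_mem_open]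
  intro Z hZ
  obtain ⟨u, v, hu, hv, hZu, hKv, huv⟩ :=
    generalized_tube_lemma isCompact_singleton hK₀ hU
      (by
        rintro ⟨z, l⟩ ⟨hz, hl⟩
        have : z = Z := hz
        subst this
        exact hZ l hl)
  refine ⟨u, ?_, hu, hZu rfl⟩
  intro Z' hZ' l hl
  exact huv (Set.mk_mem_prod hZ' (hKv hl))

end KacMoodyStab
end
end

section
/- Let S ⊂ ℂ \ {0} be a non-empty compact convex set. Then the cone ℝ_{>0}·S = {r·z : r > 0, z ∈ S} is of the form {r e^{iπφ} ∈ ℂ : r > 0 and φ₁ ≤ φ ≤ φ₂} for some real numbers φ₁ ≤ φ₂ with φ₂ − φ₁ < 1. -/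
open scoped BigOperators

noncomputable section

namespace KacMoodyStab

variable {ι : Type*} [Fintype ι] [DecidableEq ι]

/-- the cone over a non-empty compact convex subset of `ℂ \\ {0}` is a
sector of angular width `< π`. -/
theorem cone_of_compact_convex_eq_sector (S : Set ℂ) (hne : S.Nonempty)
    (hcpt : IsCompact S) (hconv : Convex ℝ S) (h0 : (0 : ℂ) ∉ S) :
    ∃ φ₁ φ₂ : ℝ, φ₁ ≤ φ₂ ∧ φ₂ - φ₁ < 1 ∧
      {z : ℂ | ∃ r : ℝ, 0 < r ∧ ∃ s ∈ S, z = r • s} = sector φ₁ φ₂ := by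
  -- separating functional
  obtain ⟨f, u, v, hfu, huv, hfv⟩ :=
    geometric_hahn_banach_compact_closed (convex_singleton (0:ℂ)) isCompact_singleton
      hconv hcpt.isClosed (by simpa [Set.disjoint_singleton_left] using h0)
  have hv0 : (0:ℝ) < v := by
    have h := hfu 0 rfl
    simp only [map_zero] at h
    linarith
  have hfpos : ∀ z ∈ S, 0 < f z := fun z hz => hv0.trans (hfv z hz)
  set c : ℂ := ⟨f 1, f Complex.I⟩ with hc
  have hfc : ∀ z : ℂ, f z = ((starRingEnd ℂ) c * z).re := by
    intro z
    have hz : z = z.re • (1:ℂ) + z.im • Complex.I := by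
      simp [Complex.ext_iff]
    conv_lhs => rw [hz]
    rw [map_add, map_smul, map_smul]
    simp [hc, Complex.ext_iff, smul_eq_mul]
    ring
  have hcne : c ≠ 0 := by
    obtain ⟨s₀, hs₀⟩ := hne
    intro h
    have := hfpos s₀ hs₀
    rw [hfc s₀, h] at this
    simp at this
  have hcabs : 0 < ‖c‖ := norm_pos_iff.mpr hcne
  set uu : ℂ := c / (‖c‖ : ℂ) with huu
  have huuabs : ‖uu‖ = 1 := by
    rw [huu, norm_div, Complex.norm_real, Real.norm_eq_abs, abs_of_pos hcabs, div_self hcabs.ne']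
  have hrepos : ∀ z ∈ S, 0 < (z * (starRingEnd ℂ) uu).re := by
    intro z hz
    have : z * (starRingEnd ℂ) uu = ((starRingEnd ℂ) c * z) / (‖c‖ : ℂ) := by
      rw [huu, map_div₀]
      simp [Complex.conj_ofReal]
      ring
    rw [this, Complex.div_ofReal_re]
    exact div_pos (by rw [← hfc]; exact hfpos z hz) hcabs
  set g : ℂ → ℝ := fun z => (Complex.arg uu + Complex.arg (z * (starRingEnd ℂ) uu)) / Real.pi
    with hg
  have hkey : ∀ z ∈ S, ((‖z‖ : ℝ) : ℂ) * Complex.exp (Real.pi * (g z) * Complex.I) = z := by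
    intro z hz
    have hπ : ((Real.pi : ℂ) * (g z : ℂ)) = ((Complex.arg uu : ℝ) : ℂ) + ((Complex.arg (z * (starRingEnd ℂ) uu) : ℝ) : ℂ) := by
      have hπc : (Real.pi : ℂ) ≠ 0 := by exact_mod_cast Real.pi_ne_zero
      rw [hg]
      push_cast
      field_simp
    have h1 : Complex.exp ((Complex.arg uu : ℂ) * Complex.I) = uu := by
      have h := Complex.norm_mul_exp_arg_mul_I uu
      rwa [huuabs, Complex.ofReal_one, one_mul] at h
    have h2 : ((‖z‖ : ℝ) : ℂ) * Complex.exp ((Complex.arg (z * (starRingEnd ℂ) uu) : ℂ) * Complex.I) = z * (starRingEnd ℂ) uu := by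
      have h := Complex.norm_mul_exp_arg_mul_I (z * (starRingEnd ℂ) uu)
      rwa [norm_mul, Complex.norm_conj, huuabs, mul_one] at h
    have h3 : uu * (starRingEnd ℂ) uu = 1 := by
      rw [Complex.mul_conj, Complex.normSq_eq_norm_sq, huuabs]
      norm_num
    calc ((‖z‖ : ℝ) : ℂ) * Complex.exp (Real.pi * (g z) * Complex.I)
        = ((‖z‖ : ℝ) : ℂ) * (Complex.exp ((Complex.arg uu : ℂ) * Complex.I) *
            Complex.exp ((Complex.arg (z * (starRingEnd ℂ) uu) : ℂ) * Complex.I)) := by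
          rw [hπ, add_mul, Complex.exp_add]
      _ = uu * (((‖z‖ : ℝ) : ℂ) * Complex.exp ((Complex.arg (z * (starRingEnd ℂ) uu) : ℂ) * Complex.I)) := by
          rw [h1]; ring
      _ = uu * (z * (starRingEnd ℂ) uu) := by rw [h2]
      _ = z * (uu * (starRingEnd ℂ) uu) := by ring
      _ = z := by rw [h3, mul_one]
  have hcont : ContinuousOn g S := by
    intro z hz
    have h1 : ContinuousAt Complex.arg (z * (starRingEnd ℂ) uu) :=
      Complex.continuousAt_arg (Complex.mem_slitPlane_iff.mpr (Or.inl (hrepos z hz)))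
    have h2 : ContinuousAt (fun w : ℂ => w * (starRingEnd ℂ) uu) z := by fun_prop
    have h3 : ContinuousAt (fun w : ℂ => Complex.arg (w * (starRingEnd ℂ) uu)) z := ContinuousAt.comp (g := Complex.arg) (x := z) h1 h2
    exact ((continuousAt_const.add h3).div_const Real.pi).continuousWithinAt
  obtain ⟨z₁, hz₁S, hmin⟩ := hcpt.exists_isMinOn hne hcont
  obtain ⟨z₂, hz₂S, hmax⟩ := hcpt.exists_isMaxOn hne hcont
  have hargs : ∀ z ∈ S, |Complex.arg (z * (starRingEnd ℂ) uu)| < Real.pi / 2 := fun z hz =>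
    Complex.abs_arg_lt_pi_div_two_iff.mpr (Or.inl (hrepos z hz))
  refine ⟨g z₁, g z₂, hmin hz₂S, ?_, ?_⟩
  · have ha1 := abs_lt.mp (hargs z₁ hz₁S)
    have ha2 := abs_lt.mp (hargs z₂ hz₂S)
    have hπ := Real.pi_pos
    have hd : g z₂ - g z₁ =
        ((z₂ * (starRingEnd ℂ) uu).arg - (z₁ * (starRingEnd ℂ) uu).arg) / Real.pi := by
      rw [hg]; ring
    rw [hd, div_lt_one hπ]
    linarith [ha1.1, ha2.2]
  · ext z
    simp only [Set.mem_setOf_eq, sector]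
    constructor
    · rintro ⟨r, hr, s, hs, rfl⟩
      have hs0 : s ≠ 0 := fun h => h0 (h ▸ hs)
      have habs : 0 < ‖s‖ := norm_pos_iff.mpr hs0
      refine ⟨r * ‖s‖, by positivity, g s, hmin hs, hmax hs, ?_⟩
      conv_lhs => rw [← hkey s hs]
      rw [Complex.real_smul]
      push_cast
      ring
    · rintro ⟨r, hr, φ, hφ1, hφ2, rfl⟩
      obtain ⟨s, hs, hgs⟩ := hconv.isPreconnected.intermediate_value hz₁S hz₂S hcont ⟨hφ1, hφ2⟩
      have hs0 : s ≠ 0 := fun h => h0 (h ▸ hs)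
      have habs : 0 < ‖s‖ := norm_pos_iff.mpr hs0
      refine ⟨r / ‖s‖, by positivity, s, hs, ?_⟩
      rw [← hgs]
      have hne' : ((‖s‖ : ℝ) : ℂ) ≠ 0 := by exact_mod_cast habs.ne'
      have hexp : Complex.exp (Real.pi * (g s : ℝ) * Complex.I) =
          ((‖s‖ : ℝ) : ℂ)⁻¹ * s := by
        rw [eq_inv_mul_iff_mul_eq₀ hne']
        exact hkey s hs
      rw [hexp, Complex.real_smul]
      push_cast
      field_simp

end KacMoodyStab
end
end
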